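/- There exists a monotone convex 3-player temporal cooperative game with no basis solution. Concretely, in the game of the paper's counterexample with v(1)=1, v(2)=4, v(3)=4, v(12)=3, v(13)=4, v(21)=4, v(23)=5, v(31)=5, v(32)=5, and all full sequences with worths v(123)=7, v(132)=6, v(213)=8, v(231)=7, v(312)=7, v(321)=7, the constraints x_1 ≥ v(1)=1, x_2 ≥ v(2)=4, x_3 ≥ v(3)=4, and x_1+x_2+x_3 = max_π v(π) = 8 are jointly infeasible. -/

import Mathlib

noncomputable section

/-- Sequences of players (lists over `Fin n`); injective sequences are `Nodup` lists. -/
abbrev TSeq (n : ℕ) := List (Fin n)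

/-- `prefBefore π i` is the longest prefix of `π` not containing `i`. -/
def prefBefore {n : ℕ} (π : TSeq n) (i : Fin n) : TSeq n := π.takeWhile (· ≠ i)

/-- The marginal-contribution solution concept. -/
def margSol {n : ℕ} (v : TSeq n → ℝ) (π : TSeq n) (i : Fin n) : ℝ :=
  if i ∈ π then v (prefBefore π i ++ [i]) - v (prefBefore π i) else 0

/-- The extended Shapley value: average marginal contribution over all full sequences,
    identified with permutations of `Fin n` via `List.ofFn`. -/
def extShap {n : ℕ} (v : TSeq n → ℝ) (i : Fin n) : ℝ :=
  (1 / n.factorial : ℝ) * ∑ σ : Equiv.Perm (Fin n), margSol v (List.ofFn ⇑σ) i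

/-- `swapSeq i j π` swaps players `i` and `j` throughout the sequence `π`. -/
def swapSeq {n : ℕ} (i j : Fin n) (π : TSeq n) : TSeq n := π.map (Equiv.swap i j)


def vq : TSeq 3 → ℚ := fun π =>
  if π = [0] then 1 else if π = [1] then 4 else if π = [2] then 4 else
  if π = [0,1] then 3 else if π = [0,2] then 4 else if π = [1,0] then 4 else
  if π = [1,2] then 5 else if π = [2,0] then 5 else if π = [2,1] then 5 else
  if π = [0,1,2] then 7 else if π = [0,2,1] then 6 else if π = [1,0,2] then 8 else
  if π = [1,2,0] then 7 else if π = [2,0,1] then 7 else if π = [2,1,0] then 7 else 0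

lemma mem16 (π : TSeq 3) (h : π.Nodup) :
    π = [] ∨ π = [0] ∨ π = [1] ∨ π = [2] ∨ π = [0,1] ∨ π = [0,2] ∨ π = [1,0] ∨
    π = [1,2] ∨ π = [2,0] ∨ π = [2,1] ∨ π = [0,1,2] ∨ π = [0,2,1] ∨ π = [1,0,2] ∨
    π = [1,2,0] ∨ π = [2,0,1] ∨ π = [2,1,0] := by
  have hlen : π.length ≤ 3 := by simpa using h.length_le_card
  match π with
  | [] => tauto
  | [a] => fin_cases a <;> tauto
  | [a,b] => fin_cases a <;> fin_cases b <;> simp_all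
  | [a,b,c] => fin_cases a <;> fin_cases b <;> fin_cases c <;> simp_all
  | a::b::c::d::l => simp at hlen; omega

set_option maxHeartbeats 1600000 in

/-- a concrete monotone convex 3-player TCG with no basis solution:
    x₁ ≥ 1, x₂ ≥ 4, x₃ ≥ 4 and x₁+x₂+x₃ = 8 are jointly infeasible.
    (Players 1, 2, 3 are encoded as 0, 1, 2 : Fin 3.) -/
theorem stmt18 :
    ∃ v : TSeq 3 → ℝ,
      (v [0] = 1 ∧ v [1] = 4 ∧ v [2] = 4 ∧
       v [0,1] = 3 ∧ v [0,2] = 4 ∧ v [1,0] = 4 ∧ v [1,2] = 5 ∧ v [2,0] = 5 ∧ v [2,1] = 5 ∧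
       v [0,1,2] = 7 ∧ v [0,2,1] = 6 ∧ v [1,0,2] = 8 ∧ v [1,2,0] = 7 ∧
       v [2,0,1] = 7 ∧ v [2,1,0] = 7) ∧
      -- monotone
      (∀ π π' : TSeq 3, π'.Nodup → π ≠ [] → π <+: π' → v π ≤ v π') ∧
      -- convex
      (∀ (π π' : TSeq 3) (i : Fin 3), π.Nodup → π'.Nodup → π ≠ [] → π' ≠ [] →
        i ∉ π → i ∉ π' → π.toFinset ⊆ π'.toFinset →
        v (π ++ [i]) - v π ≤ v (π' ++ [i]) - v π') ∧
      -- worth of the optimal sequence is 8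
      (v [1,0,2] = 8 ∧ ∀ π : TSeq 3, π.Nodup → π ≠ [] → v π ≤ 8) ∧
      -- no basis solution: the singleton constraints plus efficiency are infeasible
      ¬ ∃ x : Fin 3 → ℝ, x 0 ≥ 1 ∧ x 1 ≥ 4 ∧ x 2 ≥ 4 ∧ x 0 + x 1 + x 2 = 8 := by
  refine ⟨fun π => ((vq π : ℚ) : ℝ), ?_, ?_, ?_, ?_, ?_⟩
  · refine ⟨?_,?_,?_,?_,?_,?_,?_,?_,?_,?_,?_,?_,?_,?_,?_⟩ <;>
      simp (config := { decide := true }) [vq]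
  · intro π π' h' hne hpre
    have hπ : π.Nodup := h'.sublist hpre.sublist
    rcases mem16 π' h' with rfl|rfl|rfl|rfl|rfl|rfl|rfl|rfl|rfl|rfl|rfl|rfl|rfl|rfl|rfl|rfl <;>
    rcases mem16 π hπ with rfl|rfl|rfl|rfl|rfl|rfl|rfl|rfl|rfl|rfl|rfl|rfl|rfl|rfl|rfl|rfl <;>
    first
      | exact absurd rfl hne
      | exact absurd hpre (by decide)
      | exact Rat.cast_le.mpr (by decide)
  · intro π π' i h h' hne hne' hi hi' hsub
    have hi3 : i = 0 ∨ i = 1 ∨ i = 2 := by omega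
    rcases mem16 π h with rfl|rfl|rfl|rfl|rfl|rfl|rfl|rfl|rfl|rfl|rfl|rfl|rfl|rfl|rfl|rfl <;>
    rcases mem16 π' h' with rfl|rfl|rfl|rfl|rfl|rfl|rfl|rfl|rfl|rfl|rfl|rfl|rfl|rfl|rfl|rfl <;>
    rcases hi3 with rfl|rfl|rfl <;>
    first
      | exact absurd rfl hne
      | exact absurd rfl hne'
      | exact absurd hi (by decide)
      | exact absurd hi' (by decide)
      | exact absurd hsub (by decide)
      | (simp (config := { decide := true }) only [List.cons_append, List.nil_append, vq]; norm_num)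
  · constructor
    · simp (config := { decide := true }) [vq]
    · intro π h hne
      rcases mem16 π h with rfl|rfl|rfl|rfl|rfl|rfl|rfl|rfl|rfl|rfl|rfl|rfl|rfl|rfl|rfl|rfl <;>
      first
        | exact absurd rfl hne
        | · rw [show (8:ℝ) = ((8:ℚ):ℝ) by norm_num, Rat.cast_le]
            decide
  · rintro ⟨x, h1, h2, h3, hs⟩
    linarith
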